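/- arXiv:2412.09837 — 3 statements merged into one kernel-verified Lean document; each statement's English description precedes it below -/
import Mathlib

section
/- Let G and H be finite connected graphs. If S is a monophonic position set of the Cartesian product G □ H, then the projection π_H(S) = {h ∈ V(H) : (g,h) ∈ S for some g ∈ V(G)} is a monophonic position set of H. -/
open SimpleGraph

/-- A walk is *monophonic* if it is an induced path: it is a path and the only
edges of the graph between vertices of the walk are the edges of the walk. -/
def SimpleGraph.Walk.IsMonophonic {V : Type*} {G : SimpleGraph V} {u v : V}
    (p : G.Walk u v) : Prop :=
  p.IsPath ∧ ∀ a b : V, a ∈ p.support → b ∈ p.support → G.Adj a b → p.toSubgraph.Adj a b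

/-- A set `S` is a *monophonic position set* if no monophonic path contains
more than two vertices of `S`. -/
def SimpleGraph.IsMPSet {V : Type*} (G : SimpleGraph V) (S : Set V) : Prop :=
  ∀ ⦃u v : V⦄ (p : G.Walk u v), p.IsMonophonic → ({x ∈ S | x ∈ p.support}).ncard ≤ 2

/-- The *monophonic position number*: the largest cardinality of a monophonic
position set. -/
noncomputable def SimpleGraph.mpNum {V : Type*} (G : SimpleGraph V) : ℕ :=
  sSup {n | ∃ S : Set V, G.IsMPSet S ∧ S.ncard = n}

namespace SimpleGraph.Walk

variable {V : Type*} {G : SimpleGraph V}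

lemma toSubgraph_adj_iff_mem_edges' {u v a b : V} (p : G.Walk u v) :
    p.toSubgraph.Adj a b ↔ s(a, b) ∈ p.edges := by
  rw [← Subgraph.mem_edgeSet, Walk.mem_edges_toSubgraph]

lemma support_eq_pair_of_edge_ends {u v : V} (p : G.Walk u v) (hp : p.IsPath)
    (he : s(u, v) ∈ p.edges) : p.support = [u, v] := by
  cases p with
  | nil => simp at he
  | @cons _ w _ h q =>
    rw [edges_cons, List.mem_cons] at he
    rcases he with he | he
    · rw [Sym2.eq_iff] at he
      rcases he with ⟨-, rfl⟩ | ⟨rfl, rfl⟩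
      · rw [isPath_iff_eq_nil.mp hp.of_cons]
        simp
      · exact absurd rfl h.ne
    · exact absurd (q.fst_mem_support_of_mem_edges he) ((cons_isPath_iff h q).mp hp).2

lemma IsMonophonic.of_append_left {u v w : V} {p : G.Walk u v} {r : G.Walk v w}
    (h : (p.append r).IsMonophonic) : p.IsMonophonic := by
  refine ⟨h.1.of_append_left, fun a b ha hb hadj => ?_⟩
  have h2 := h.2 a b (mem_support_append_iff _ _ |>.mpr (Or.inl ha))
    (mem_support_append_iff _ _ |>.mpr (Or.inl hb)) hadj
  rw [toSubgraph_adj_iff_mem_edges', edges_append, List.mem_append] at h2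
  rcases h2 with h2 | h2
  · exact (toSubgraph_adj_iff_mem_edges' p).mpr h2
  · exfalso
    have hnd := h.1.support_nodup
    rw [support_append, List.nodup_append] at hnd
    have hav : a = v := by
      have har := r.fst_mem_support_of_mem_edges h2
      rw [r.support_eq_cons, List.mem_cons] at har
      rcases har with rfl | har
      · rfl
      · exact absurd har (fun h => hnd.2.2 a ha a h rfl)
    have hbv : b = v := by
      have hbr := r.snd_mem_support_of_mem_edges h2
      rw [r.support_eq_cons, List.mem_cons] at hbr
      rcases hbr with rfl | hbr
      · rfl
      · exact absurd hbr (fun h => hnd.2.2 b hb b h rfl)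
    exact hadj.ne (hav.trans hbv.symm)

lemma IsMonophonic.of_append_right {u v w : V} {p : G.Walk u v} {r : G.Walk v w}
    (h : (p.append r).IsMonophonic) : r.IsMonophonic := by
  refine ⟨h.1.of_append_right, fun a b ha hb hadj => ?_⟩
  have h2 := h.2 a b (mem_support_append_iff _ _ |>.mpr (Or.inr ha))
    (mem_support_append_iff _ _ |>.mpr (Or.inr hb)) hadj
  rw [toSubgraph_adj_iff_mem_edges', edges_append, List.mem_append] at h2
  rcases h2 with h2 | h2
  swap
  · exact (toSubgraph_adj_iff_mem_edges' r).mpr h2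
  · exfalso
    have hnd := h.1.support_nodup
    rw [support_append, List.nodup_append] at hnd
    have hav : a = v := by
      rw [r.support_eq_cons, List.mem_cons] at ha
      rcases ha with rfl | ha
      · rfl
      · exact absurd ha (fun h => hnd.2.2 a (p.fst_mem_support_of_mem_edges h2) a h rfl)
    have hbv : b = v := by
      rw [r.support_eq_cons, List.mem_cons] at hb
      rcases hb with rfl | hb
      · rfl
      · exact absurd hb (fun h => hnd.2.2 b (p.snd_mem_support_of_mem_edges h2) b h rfl)
    exact hadj.ne (hav.trans hbv.symm)

lemma pair_decomp {u v a b : V} (p : G.Walk u v) (ma : a ∈ p.support)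
    (mb : b ∈ p.support) :
    ∃ x y : V, ((x = a ∧ y = b) ∨ (x = b ∧ y = a)) ∧
      ∃ (w₁ : G.Walk u x) (w₂ : G.Walk x y) (w₃ : G.Walk y v),
        p = w₁.append (w₂.append w₃) := by
  obtain ⟨q, r, rfl⟩ := mem_support_iff_exists_append.mp ma
  rcases (mem_support_append_iff q r).mp mb with hb | hb
  · obtain ⟨q₁, q₂, rfl⟩ := mem_support_iff_exists_append.mp hb
    exact ⟨b, a, Or.inr ⟨rfl, rfl⟩, q₁, q₂, r, (append_assoc _ _ _).symm⟩
  · obtain ⟨r₁, r₂, rfl⟩ := mem_support_iff_exists_append.mp hb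
    exact ⟨a, b, Or.inl ⟨rfl, rfl⟩, q, r₁, r₂, rfl⟩

lemma triple_decomp {u v h₁ h₂ h₃ : V} (p : G.Walk u v)
    (m₁ : h₁ ∈ p.support) (m₂ : h₂ ∈ p.support) (m₃ : h₃ ∈ p.support)
    (d₁₂ : h₁ ≠ h₂) (d₁₃ : h₁ ≠ h₃) (d₂₃ : h₂ ≠ h₃) :
    ∃ x y z : V, ∃ (w₁ : G.Walk u x) (w₂ : G.Walk x z) (w₃ : G.Walk z v),
      p = w₁.append (w₂.append w₃) ∧ y ∈ w₂.support ∧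
      x ∈ ({h₁, h₂, h₃} : Set V) ∧ y ∈ ({h₁, h₂, h₃} : Set V) ∧
      z ∈ ({h₁, h₂, h₃} : Set V) ∧ x ≠ y ∧ x ≠ z ∧ y ≠ z := by
  obtain ⟨x, y, hxy, w₁, w₂, w₃, rfl⟩ := pair_decomp p m₁ m₂
  have hx : x ∈ ({h₁, h₂, h₃} : Set V) := by
    rcases hxy with ⟨rfl, -⟩ | ⟨rfl, -⟩ <;> simp
  have hy : y ∈ ({h₁, h₂, h₃} : Set V) := by
    rcases hxy with ⟨-, rfl⟩ | ⟨-, rfl⟩ <;> simp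
  have hxyne : x ≠ y := by
    rcases hxy with ⟨rfl, rfl⟩ | ⟨rfl, rfl⟩
    · exact d₁₂
    · exact d₁₂.symm
  have hx3 : x ≠ h₃ := by
    rcases hxy with ⟨rfl, -⟩ | ⟨rfl, -⟩
    · exact d₁₃
    · exact d₂₃
  have hy3 : y ≠ h₃ := by
    rcases hxy with ⟨-, rfl⟩ | ⟨-, rfl⟩
    · exact d₂₃
    · exact d₁₃
  rw [mem_support_append_iff, mem_support_append_iff] at m₃
  rcases m₃ with hm | hm | hm
  · obtain ⟨c, d, rfl⟩ := mem_support_iff_exists_append.mp hm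
    refine ⟨h₃, x, y, c, d.append w₂, w₃, ?_, ?_, by simp, hx, hy,
      hx3.symm, hy3.symm, hxyne⟩
    · rw [← append_assoc, ← append_assoc]
    · exact (mem_support_append_iff d w₂).mpr (Or.inl d.end_mem_support)
  · exact ⟨x, h₃, y, w₁, w₂, w₃, rfl, hm, hx, by simp, hy, hx3, hxyne, hy3.symm⟩
  · obtain ⟨e, f, rfl⟩ := mem_support_iff_exists_append.mp hm
    refine ⟨x, y, h₃, w₁, w₂.append e, f, ?_, ?_, hx, hy, by simp,
      hxyne, hx3, hy3⟩
    · rw [← append_assoc]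
    · exact (mem_support_append_iff w₂ e).mpr (Or.inl w₂.end_mem_support)

lemma edge_mem_of_length_eq_one {x y : V} (w : G.Walk x y) (h : w.length = 1) :
    s(x, y) ∈ w.edges := by
  cases w with
  | nil => simp at h
  | cons hadj w' =>
    cases w' with
    | nil => simp
    | cons _ _ => simp [length_cons] at h

lemma exists_isMonophonic {u v : V} (h : G.Reachable u v) :
    ∃ p : G.Walk u v, p.IsMonophonic := by
  classical
  obtain ⟨w, hw⟩ := h.exists_walk_length_eq_dist
  refine ⟨w.bypass, w.bypass_isPath, fun a b ha hb hadj => ?_⟩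
  by_contra hne
  rw [toSubgraph_adj_iff_mem_edges'] at hne
  have hlen : w.bypass.length = G.dist u v :=
    le_antisymm (hw ▸ w.length_bypass_le) (dist_le _)
  obtain ⟨x, y, hxy, w₁, w₂, w₃, heq⟩ := pair_decomp w.bypass ha hb
  have hadj' : G.Adj x y := by
    rcases hxy with ⟨rfl, rfl⟩ | ⟨rfl, rfl⟩
    · exact hadj
    · exact hadj.symm
  have hxyedge : s(x, y) ∉ w₂.edges := by
    intro hmem
    apply hne
    have hmem' : s(x, y) ∈ w.bypass.edges := by
      rw [heq, edges_append, edges_append]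
      simp [hmem]
    rcases hxy with ⟨rfl, rfl⟩ | ⟨rfl, rfl⟩
    · exact hmem'
    · rwa [Sym2.eq_swap] at hmem'
  have h2 : 2 ≤ w₂.length := by
    by_contra hlt
    push_neg at hlt
    interval_cases hl : w₂.length
    · exact hadj'.ne (eq_of_length_eq_zero hl)
    · exact hxyedge (w₂.edge_mem_of_length_eq_one hl)
  have hshort := dist_le (w₁.append ((Walk.cons hadj' Walk.nil).append w₃))
  rw [← hlen, heq] at hshort
  simp only [length_append, length_cons, length_nil] at hshort
  omega

end SimpleGraph.Walk

/-- If `S` is a monophonic position set of `G □ H`, then the projection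
`π_H(S)` is a monophonic position set of `H`. -/
theorem isMPSet_snd_image_of_isMPSet_boxProd {α β : Type*} [Fintype α] [Fintype β]
    (G : SimpleGraph α) (H : SimpleGraph β) (hG : G.Connected) (hH : H.Connected)
    (S : Set (α × β)) (hS : (G □ H).IsMPSet S) :
    H.IsMPSet (Prod.snd '' S) := by
  intro u v p hp
  by_contra hc
  push_neg at hc
  set T : Set β := {x ∈ Prod.snd '' S | x ∈ p.support} with hT
  obtain ⟨t, hts, ht3⟩ := Set.exists_subset_card_eq (hc : 2 < T.ncard)
  obtain ⟨h₁, h₂, h₃, d₁₂, d₁₃, d₂₃, rfl⟩ := Set.ncard_eq_three.mp ht3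
  have hm₁ : h₁ ∈ T := hts (by simp)
  have hm₂ : h₂ ∈ T := hts (by simp)
  have hm₃ : h₃ ∈ T := hts (by simp)
  obtain ⟨x, y, z, w₁, w₂, w₃, heq, hyB, hxT, hyT, hzT, hxy, hxz, hyz⟩ :=
    p.triple_decomp hm₁.2 hm₂.2 hm₃.2 d₁₂ d₁₃ d₂₃
  -- the middle segment is monophonic
  have hB : w₂.IsMonophonic := by
    rw [heq] at hp
    exact hp.of_append_right.of_append_left
  -- x, y, z are in the image of S
  have hTsub : ({h₁, h₂, h₃} : Set β) ⊆ Prod.snd '' S := by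
    intro s hs
    rcases hs with rfl | rfl | rfl
    · exact hm₁.1
    · exact hm₂.1
    · exact hm₃.1
  obtain ⟨sx, hgxS', hgx2⟩ := hTsub hxT
  obtain ⟨sy, hgyS', hgy2⟩ := hTsub hyT
  obtain ⟨sz, hgzS', hgz2⟩ := hTsub hzT
  set gx := sx.1 with hgx1
  set gy := sy.1 with hgy1
  set gz := sz.1 with hgz1
  have hgxS : (gx, x) ∈ S := by rw [hgx1, ← hgx2, Prod.mk.eta]; exact hgxS'
  have hgyS : (gy, y) ∈ S := by rw [hgy1, ← hgy2, Prod.mk.eta]; exact hgyS'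
  have hgzS : (gz, z) ∈ S := by rw [hgz1, ← hgz2, Prod.mk.eta]; exact hgzS'
  clear hgxS' hgyS' hgzS' hgx2 hgy2 hgz2
  -- x and z are not adjacent in H
  have hxzadj : ¬ H.Adj x z := by
    intro hadj
    have := hB.2 x z w₂.start_mem_support w₂.end_mem_support hadj
    rw [Walk.toSubgraph_adj_iff_mem_edges'] at this
    have hsup := w₂.support_eq_pair_of_edge_ends hB.1 this
    rw [hsup] at hyB
    simp only [List.mem_cons, List.mem_singleton, List.not_mem_nil, or_false] at hyB
    rcases hyB with h | h
    · exact hxy h.symm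
    · exact hyz h
  -- monophonic walks in G
  obtain ⟨Q₁, hQ₁⟩ := SimpleGraph.Walk.exists_isMonophonic (hG.preconnected gx gy)
  obtain ⟨Q₂, hQ₂⟩ := SimpleGraph.Walk.exists_isMonophonic (hG.preconnected gy gz)
  -- homs into the box product
  let fx : G →g G □ H := ⟨fun g => (g, x), fun h => SimpleGraph.boxProd_adj_left.mpr h⟩
  let fy : H →g G □ H := ⟨fun h => (gy, h), fun h => SimpleGraph.boxProd_adj_right.mpr h⟩
  let fz : G →g G □ H := ⟨fun g => (g, z), fun h => SimpleGraph.boxProd_adj_left.mpr h⟩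
  let W : (G □ H).Walk (gx, x) (gz, z) :=
    (Q₁.map fx).append ((w₂.map fy).append (Q₂.map fz))
  -- membership description of W.support
  have hWsup : ∀ a : α × β, a ∈ W.support ↔
      (∃ t ∈ Q₁.support, a = (t, x)) ∨ (∃ t ∈ w₂.support, a = (gy, t)) ∨
      (∃ t ∈ Q₂.support, a = (t, z)) := by
    intro a
    rw [Walk.mem_support_append_iff, Walk.mem_support_append_iff]
    simp only [Walk.support_map, List.mem_map]
    constructor
    · rintro (⟨t, ht, rfl⟩ | ⟨t, ht, rfl⟩ | ⟨t, ht, rfl⟩)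
      · exact Or.inl ⟨t, ht, rfl⟩
      · exact Or.inr (Or.inl ⟨t, ht, rfl⟩)
      · exact Or.inr (Or.inr ⟨t, ht, rfl⟩)
    · rintro (⟨t, ht, rfl⟩ | ⟨t, ht, rfl⟩ | ⟨t, ht, rfl⟩)
      · exact Or.inl ⟨t, ht, rfl⟩
      · exact Or.inr (Or.inl ⟨t, ht, rfl⟩)
      · exact Or.inr (Or.inr ⟨t, ht, rfl⟩)
  -- x not in tail of w₂.support, gy not in tail of Q₂.support
  have hxtail : x ∉ w₂.support.tail := by
    intro h
    have := hB.1.support_nodup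
    rw [w₂.support_eq_cons] at this
    exact (List.nodup_cons.mp this).1 h
  have hgytail : gy ∉ Q₂.support.tail := by
    intro h
    have := hQ₂.1.support_nodup
    rw [Q₂.support_eq_cons] at this
    exact (List.nodup_cons.mp this).1 h
  -- W is a path
  have hWpath : W.IsPath := by
    rw [Walk.isPath_def]
    show ((Q₁.map fx).append ((w₂.map fy).append (Q₂.map fz))).support.Nodup
    rw [Walk.support_append, Walk.support_append]
    have hw2c : (w₂.map fy).support = (gy, x) :: w₂.support.tail.map fy := by
      rw [Walk.support_map, w₂.support_eq_cons]; rfl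
    have hq2c : (Q₂.map fz).support = (gy, z) :: Q₂.support.tail.map fz := by
      rw [Walk.support_map, Q₂.support_eq_cons]; rfl
    rw [hw2c, hq2c, List.cons_append, List.tail_cons, List.tail_cons,
      Walk.support_map, List.nodup_append, List.nodup_append]
    have injx : Function.Injective (fun g => ((g, x) : α × β)) :=
      fun a b h => congrArg Prod.fst h
    have injy : Function.Injective (fun h => ((gy, h) : α × β)) :=
      fun a b h => congrArg Prod.snd h
    have injz : Function.Injective (fun g => ((g, z) : α × β)) :=
      fun a b h => congrArg Prod.fst h
    refine ⟨hQ₁.1.support_nodup.map injx, ⟨?_, ?_, ?_⟩, ?_⟩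
    · exact ((List.tail_sublist _).nodup hB.1.support_nodup).map injy
    · exact ((List.tail_sublist _).nodup hQ₂.1.support_nodup).map injz
    · -- disjoint middle tail / right tail
      rintro a ha _ hb rfl
      obtain ⟨s, hs, rfl⟩ := List.mem_map.mp ha
      obtain ⟨r, hr, hre⟩ := List.mem_map.mp hb
      have h' : r = gy := congrArg Prod.fst hre
      exact hgytail (h' ▸ hr)
    · -- disjoint left / rest
      rintro a ha _ hb rfl
      obtain ⟨s, hs, rfl⟩ := List.mem_map.mp ha
      rcases List.mem_append.mp hb with hb | hb
      · obtain ⟨r, hr, hre⟩ := List.mem_map.mp hb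
        have h' : r = x := congrArg Prod.snd hre
        exact hxtail (h' ▸ hr)
      · obtain ⟨r, hr, hre⟩ := List.mem_map.mp hb
        have h' : z = x := congrArg Prod.snd hre
        exact hxz h'.symm
  -- edge membership claims
  have hC₁ : ∀ s t : α, s ∈ Q₁.support → t ∈ Q₁.support → G.Adj s t →
      W.toSubgraph.Adj (s, x) (t, x) := by
    intro s t hs ht hadj
    rw [Walk.toSubgraph_adj_iff_mem_edges']
    have := (Walk.toSubgraph_adj_iff_mem_edges' Q₁).mp (hQ₁.2 s t hs ht hadj)
    show _ ∈ ((Q₁.map fx).append ((w₂.map fy).append (Q₂.map fz))).edges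
    rw [Walk.edges_append, List.mem_append]
    left
    rw [Walk.edges_map, List.mem_map]
    exact ⟨s(s, t), this, rfl⟩
  have hC₂ : ∀ s t : β, s ∈ w₂.support → t ∈ w₂.support → H.Adj s t →
      W.toSubgraph.Adj (gy, s) (gy, t) := by
    intro s t hs ht hadj
    rw [Walk.toSubgraph_adj_iff_mem_edges']
    have := (Walk.toSubgraph_adj_iff_mem_edges' w₂).mp (hB.2 s t hs ht hadj)
    show _ ∈ ((Q₁.map fx).append ((w₂.map fy).append (Q₂.map fz))).edges
    rw [Walk.edges_append, Walk.edges_append, List.mem_append, List.mem_append]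
    right; left
    rw [Walk.edges_map, List.mem_map]
    exact ⟨s(s, t), this, rfl⟩
  have hC₃ : ∀ s t : α, s ∈ Q₂.support → t ∈ Q₂.support → G.Adj s t →
      W.toSubgraph.Adj (s, z) (t, z) := by
    intro s t hs ht hadj
    rw [Walk.toSubgraph_adj_iff_mem_edges']
    have := (Walk.toSubgraph_adj_iff_mem_edges' Q₂).mp (hQ₂.2 s t hs ht hadj)
    show _ ∈ ((Q₁.map fx).append ((w₂.map fy).append (Q₂.map fz))).edges
    rw [Walk.edges_append, Walk.edges_append, List.mem_append, List.mem_append]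
    right; right
    rw [Walk.edges_map, List.mem_map]
    exact ⟨s(s, t), this, rfl⟩
  -- W is monophonic
  have hWmono : W.IsMonophonic := by
    refine ⟨hWpath, fun a b ha hb hadj => ?_⟩
    rw [hWsup] at ha hb
    rcases ha with ⟨s, hs, rfl⟩ | ⟨s, hs, rfl⟩ | ⟨s, hs, rfl⟩ <;>
        rcases hb with ⟨t, ht, rfl⟩ | ⟨t, ht, rfl⟩ | ⟨t, ht, rfl⟩ <;>
        rcases SimpleGraph.boxProd_adj.mp hadj with ⟨h1, h2⟩ | ⟨h1, h2⟩ <;>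
        dsimp only at h1 h2 <;>
      first
      | exact absurd h1 (G.loopless.irrefl _)
      | exact absurd h1 (H.loopless.irrefl _)
      | exact absurd h1 hxz
      | exact absurd h1.symm hxz
      | exact absurd h1 hxzadj
      | exact absurd h1.symm hxzadj
      | exact absurd h2 (G.loopless.irrefl _)
      | exact absurd h2 (H.loopless.irrefl _)
      | exact absurd h2 hxz
      | exact absurd h2.symm hxz
      | exact absurd h2 hxzadj
      | exact absurd h2.symm hxzadj
      | ((obtain rfl := h1)
         first
           | exact hC₁ s t hs ht h1
           | exact hC₂ s t hs ht h1
           | exact hC₃ s t hs ht h1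
           | exact hC₁ s gy hs Q₁.end_mem_support h1
           | exact hC₁ gy t Q₁.end_mem_support ht h1
           | exact hC₃ gy t Q₂.start_mem_support ht h1
           | exact hC₃ s gy hs Q₂.start_mem_support h1
           | exact hC₂ x t w₂.start_mem_support ht h1
           | exact hC₂ s x hs w₂.start_mem_support h1
           | exact hC₂ s z hs w₂.end_mem_support h1
           | exact hC₂ z t w₂.end_mem_support ht h1
           | exact hC₁ s t hs ht h2
           | exact hC₂ s t hs ht h2
           | exact hC₃ s t hs ht h2
           | exact hC₁ s gy hs Q₁.end_mem_support h2
           | exact hC₁ gy t Q₁.end_mem_support ht h2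
           | exact hC₃ gy t Q₂.start_mem_support ht h2
           | exact hC₃ s gy hs Q₂.start_mem_support h2
           | exact hC₂ x t w₂.start_mem_support ht h2
           | exact hC₂ s x hs w₂.start_mem_support h2
           | exact hC₂ s z hs w₂.end_mem_support h2
           | exact hC₂ z t w₂.end_mem_support ht h2)
      | ((obtain rfl := h1.symm)
         first
           | exact hC₁ s t hs ht h1
           | exact hC₂ s t hs ht h1
           | exact hC₃ s t hs ht h1
           | exact hC₁ s gy hs Q₁.end_mem_support h1
           | exact hC₁ gy t Q₁.end_mem_support ht h1
           | exact hC₃ gy t Q₂.start_mem_support ht h1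
           | exact hC₃ s gy hs Q₂.start_mem_support h1
           | exact hC₂ x t w₂.start_mem_support ht h1
           | exact hC₂ s x hs w₂.start_mem_support h1
           | exact hC₂ s z hs w₂.end_mem_support h1
           | exact hC₂ z t w₂.end_mem_support ht h1
           | exact hC₁ s t hs ht h2
           | exact hC₂ s t hs ht h2
           | exact hC₃ s t hs ht h2
           | exact hC₁ s gy hs Q₁.end_mem_support h2
           | exact hC₁ gy t Q₁.end_mem_support ht h2
           | exact hC₃ gy t Q₂.start_mem_support ht h2
           | exact hC₃ s gy hs Q₂.start_mem_support h2
           | exact hC₂ x t w₂.start_mem_support ht h2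
           | exact hC₂ s x hs w₂.start_mem_support h2
           | exact hC₂ s z hs w₂.end_mem_support h2
           | exact hC₂ z t w₂.end_mem_support ht h2)
      | ((obtain rfl := h2)
         first
           | exact hC₁ s t hs ht h1
           | exact hC₂ s t hs ht h1
           | exact hC₃ s t hs ht h1
           | exact hC₁ s gy hs Q₁.end_mem_support h1
           | exact hC₁ gy t Q₁.end_mem_support ht h1
           | exact hC₃ gy t Q₂.start_mem_support ht h1
           | exact hC₃ s gy hs Q₂.start_mem_support h1
           | exact hC₂ x t w₂.start_mem_support ht h1
           | exact hC₂ s x hs w₂.start_mem_support h1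
           | exact hC₂ s z hs w₂.end_mem_support h1
           | exact hC₂ z t w₂.end_mem_support ht h1
           | exact hC₁ s t hs ht h2
           | exact hC₂ s t hs ht h2
           | exact hC₃ s t hs ht h2
           | exact hC₁ s gy hs Q₁.end_mem_support h2
           | exact hC₁ gy t Q₁.end_mem_support ht h2
           | exact hC₃ gy t Q₂.start_mem_support ht h2
           | exact hC₃ s gy hs Q₂.start_mem_support h2
           | exact hC₂ x t w₂.start_mem_support ht h2
           | exact hC₂ s x hs w₂.start_mem_support h2
           | exact hC₂ s z hs w₂.end_mem_support h2
           | exact hC₂ z t w₂.end_mem_support ht h2)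
      | ((obtain rfl := h2.symm)
         first
           | exact hC₁ s t hs ht h1
           | exact hC₂ s t hs ht h1
           | exact hC₃ s t hs ht h1
           | exact hC₁ s gy hs Q₁.end_mem_support h1
           | exact hC₁ gy t Q₁.end_mem_support ht h1
           | exact hC₃ gy t Q₂.start_mem_support ht h1
           | exact hC₃ s gy hs Q₂.start_mem_support h1
           | exact hC₂ x t w₂.start_mem_support ht h1
           | exact hC₂ s x hs w₂.start_mem_support h1
           | exact hC₂ s z hs w₂.end_mem_support h1
           | exact hC₂ z t w₂.end_mem_support ht h1
           | exact hC₁ s t hs ht h2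
           | exact hC₂ s t hs ht h2
           | exact hC₃ s t hs ht h2
           | exact hC₁ s gy hs Q₁.end_mem_support h2
           | exact hC₁ gy t Q₁.end_mem_support ht h2
           | exact hC₃ gy t Q₂.start_mem_support ht h2
           | exact hC₃ s gy hs Q₂.start_mem_support h2
           | exact hC₂ x t w₂.start_mem_support ht h2
           | exact hC₂ s x hs w₂.start_mem_support h2
           | exact hC₂ s z hs w₂.end_mem_support h2
           | exact hC₂ z t w₂.end_mem_support ht h2)
      | (skip
         first
           | exact hC₁ s t hs ht h1
           | exact hC₂ s t hs ht h1
           | exact hC₃ s t hs ht h1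
           | exact hC₁ s gy hs Q₁.end_mem_support h1
           | exact hC₁ gy t Q₁.end_mem_support ht h1
           | exact hC₃ gy t Q₂.start_mem_support ht h1
           | exact hC₃ s gy hs Q₂.start_mem_support h1
           | exact hC₂ x t w₂.start_mem_support ht h1
           | exact hC₂ s x hs w₂.start_mem_support h1
           | exact hC₂ s z hs w₂.end_mem_support h1
           | exact hC₂ z t w₂.end_mem_support ht h1
           | exact hC₁ s t hs ht h2
           | exact hC₂ s t hs ht h2
           | exact hC₃ s t hs ht h2
           | exact hC₁ s gy hs Q₁.end_mem_support h2
           | exact hC₁ gy t Q₁.end_mem_support ht h2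
           | exact hC₃ gy t Q₂.start_mem_support ht h2
           | exact hC₃ s gy hs Q₂.start_mem_support h2
           | exact hC₂ x t w₂.start_mem_support ht h2
           | exact hC₂ s x hs w₂.start_mem_support h2
           | exact hC₂ s z hs w₂.end_mem_support h2
           | exact hC₂ z t w₂.end_mem_support ht h2)
  -- conclude
  have hcard := hS W hWmono
  have hne₁ : ((gx, x) : α × β) ≠ (gy, y) := fun h => hxy (congrArg Prod.snd h)
  have hne₂ : ((gx, x) : α × β) ≠ (gz, z) := fun h => hxz (congrArg Prod.snd h)
  have hne₃ : ((gy, y) : α × β) ≠ (gz, z) := fun h => hyz (congrArg Prod.snd h)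
  have hsub : ({(gx, x), (gy, y), (gz, z)} : Set (α × β)) ⊆
      {w ∈ S | w ∈ W.support} := by
    rintro a (rfl | rfl | rfl)
    · exact ⟨hgxS, (hWsup _).mpr (Or.inl ⟨gx, Q₁.start_mem_support, rfl⟩)⟩
    · exact ⟨hgyS, (hWsup _).mpr (Or.inr (Or.inl ⟨y, hyB, rfl⟩))⟩
    · exact ⟨hgzS, (hWsup _).mpr (Or.inr (Or.inr ⟨gz, Q₂.end_mem_support, rfl⟩))⟩
  have h3 : ({(gx, x), (gy, y), (gz, z)} : Set (α × β)).ncard = 3 :=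
    Set.ncard_eq_three.mpr ⟨_, _, _, hne₁, hne₂, hne₃, rfl⟩
  have hle := Set.ncard_le_ncard hsub (Set.toFinite _)
  omega
end

section
/- Let G and H be finite connected graphs and let S be a monophonic position set of the Cartesian product G □ H. If (u,v) ∈ S, then S ∩ ({u} × V(H)) = {(u,v)} or S ∩ (V(G) × {v}) = {(u,v)}. -/
open SimpleGraph

section Aux

variable {V : Type*} {G : SimpleGraph V}

private lemma aux_shortcut {u w a b : V} (q : G.Walk u a) (r1 : G.Walk a b) (r2 : G.Walk b w)
    (hadj : G.Adj a b)
    (hmin : ∀ z : G.Walk u w, q.length + r1.length + r2.length ≤ z.length)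
    (hn : s(a, b) ∉ r1.edges) : False := by
  have h0 : r1.length ≠ 0 := fun h => hadj.ne (SimpleGraph.Walk.eq_of_length_eq_zero h)
  have h1 : r1.length ≠ 1 := by
    intro h
    apply hn
    have hadj1 := r1.toSubgraph_adj_getVert (i := 0) (by omega)
    have hb1 : r1.getVert (0 + 1) = b := by
      rw [show (0 : ℕ) + 1 = r1.length by omega, SimpleGraph.Walk.getVert_length]
    rw [SimpleGraph.Walk.getVert_zero, hb1] at hadj1
    exact (r1.mem_edges_toSubgraph).mp (SimpleGraph.Subgraph.mem_edgeSet.mpr hadj1)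
  have := hmin (q.append (SimpleGraph.Walk.cons hadj r2))
  simp only [SimpleGraph.Walk.length_append, SimpleGraph.Walk.length_cons] at this
  omega

/-- In a connected graph, any two reachable vertices are joined by a monophonic
(induced) path: take any shortest path. -/
lemma exists_isMonophonic_walk {u w : V} (h : G.Reachable u w) :
    ∃ p : G.Walk u w, p.IsMonophonic := by
  obtain ⟨p, hp⟩ := h.exists_walk_length_eq_dist
  refine ⟨p, p.isPath_of_length_eq_dist hp, ?_⟩
  intro a b ha hb hadj
  by_contra hn
  have hn' : s(a, b) ∉ p.edges := fun he => hn ((p.mem_edges_toSubgraph).mpr he)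
  have hmin : ∀ z : G.Walk u w, p.length ≤ z.length := fun z => hp ▸ G.dist_le z
  obtain ⟨q, r, rfl⟩ := SimpleGraph.Walk.mem_support_iff_exists_append.mp ha
  rcases (SimpleGraph.Walk.mem_support_append_iff q r).mp hb with hbq | hbr
  · obtain ⟨q1, q2, rfl⟩ := SimpleGraph.Walk.mem_support_iff_exists_append.mp hbq
    refine aux_shortcut q1 q2 r hadj.symm (fun z => ?_) (fun he => hn' ?_)
    · have := hmin z
      simp only [SimpleGraph.Walk.length_append] at this
      omega
    · simp only [SimpleGraph.Walk.edges_append, List.mem_append]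
      left; right
      rwa [Sym2.eq_swap] at he
  · obtain ⟨r1, r2, rfl⟩ := SimpleGraph.Walk.mem_support_iff_exists_append.mp hbr
    refine aux_shortcut q r1 r2 hadj (fun z => ?_) (fun he => hn' ?_)
    · have := hmin z
      simp only [SimpleGraph.Walk.length_append] at this
      omega
    · simp only [SimpleGraph.Walk.edges_append, List.mem_append]
      right; left
      exact he

end Aux

/-- If `S` is a monophonic position set of `G □ H` and `(u,v) ∈ S`, then
`S ∩ ({u} × V(H)) = {(u,v)}` or `S ∩ (V(G) × {v}) = {(u,v)}`. -/
theorem isMPSet_boxProd_layer_inter {α β : Type*} [Fintype α] [Fintype β]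
    (G : SimpleGraph α) (H : SimpleGraph β) (hG : G.Connected) (hH : H.Connected)
    (S : Set (α × β)) (hS : (G □ H).IsMPSet S) (u : α) (v : β) (huv : (u, v) ∈ S) :
    S ∩ ({u} ×ˢ Set.univ) = {(u, v)} ∨ S ∩ (Set.univ ×ˢ {v}) = {(u, v)} := by
  by_contra hcon
  push_neg at hcon
  obtain ⟨h1, h2⟩ := hcon
  have hA : (u, v) ∈ S ∩ ({u} ×ˢ (Set.univ : Set β)) := ⟨huv, rfl, trivial⟩
  have hB : (u, v) ∈ S ∩ ((Set.univ : Set α) ×ˢ {v}) := ⟨huv, trivial, rfl⟩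
  have hx : ∃ x ∈ S ∩ ({u} ×ˢ (Set.univ : Set β)), x ≠ (u, v) := by
    by_contra hc
    push_neg at hc
    exact h1 (subset_antisymm (fun x hx => hc x hx) (Set.singleton_subset_iff.mpr hA))
  have hy : ∃ y ∈ S ∩ ((Set.univ : Set α) ×ˢ {v}), y ≠ (u, v) := by
    by_contra hc
    push_neg at hc
    exact h2 (subset_antisymm (fun x hx => hc x hx) (Set.singleton_subset_iff.mpr hB))
  obtain ⟨x, ⟨hxS, hx1, -⟩, hxne⟩ := hx
  obtain ⟨y, ⟨hyS, -, hy2⟩, hyne⟩ := hy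
  rw [Set.mem_singleton_iff] at hx1 hy2
  set v' := x.2 with hv'def
  set u' := y.1 with hu'def
  have hxeq : x = (u, v') := Prod.ext hx1 rfl
  have hyeq : y = (u', v) := Prod.ext rfl hy2
  have hv' : v' ≠ v := fun h => hxne (by rw [hxeq, h])
  have hu' : u' ≠ u := fun h => hyne (by rw [hyeq, h])
  obtain ⟨pH, hpHpath, hpHind⟩ := exists_isMonophonic_walk (hH.preconnected v' v)
  obtain ⟨pG, hpGpath, hpGind⟩ := exists_isMonophonic_walk (hG.preconnected u u')
  let P : (G □ H).Walk (u, v') (u, v) := pH.boxProdRight G u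
  let Q : (G □ H).Walk (u, v) (u', v) := pG.boxProdLeft H v
  have hPsupp : ∀ c, c ∈ P.support ↔ ∃ z ∈ pH.support, (u, z) = c := by
    intro c
    rw [show P.support = (pH.map (G.boxProdRight H u).toHom).support from rfl,
      SimpleGraph.Walk.support_map, List.mem_map]
    exact Iff.rfl
  have hQsupp : ∀ c, c ∈ Q.support ↔ ∃ z ∈ pG.support, (z, v) = c := by
    intro c
    rw [show Q.support = (pG.map (G.boxProdLeft H v).toHom).support from rfl,
      SimpleGraph.Walk.support_map, List.mem_map]
    exact Iff.rfl
  have hPpath : P.IsPath :=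
    pH.map_isPath_of_injective (fun a b h => congrArg Prod.snd h) hpHpath
  have hQpath : Q.IsPath :=
    pG.map_isPath_of_injective (fun a b h => congrArg Prod.fst h) hpGpath
  let W : (G □ H).Walk (u, v') (u', v) := P.append Q
  have hWpath : W.IsPath := by
    rw [SimpleGraph.Walk.isPath_def, show W.support = (P.append Q).support from rfl,
      SimpleGraph.Walk.support_append, List.nodup_append]
    refine ⟨hPpath.support_nodup, hQpath.support_nodup.tail, ?_⟩
    intro c hcP c' hcQt hcc'
    subst hcc'
    have hcQ : c ∈ Q.support := List.mem_of_mem_tail hcQt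
    obtain ⟨z1, hz1, hc1⟩ := (hPsupp c).mp hcP
    obtain ⟨z2, hz2, hc2⟩ := (hQsupp c).mp hcQ
    have hcuv : c = (u, v) := by
      rw [← hc1] at hc2 ⊢
      rw [show z1 = v from congrArg Prod.snd hc2.symm]
    have hnt : (u, v) ∉ Q.support.tail := by
      have hnodup := hQpath.support_nodup
      rw [Q.support_eq_cons] at hnodup
      exact (List.nodup_cons.mp hnodup).1
    exact hnt (hcuv ▸ hcQt)
  have hWsub : W.toSubgraph = P.toSubgraph ⊔ Q.toSubgraph := P.toSubgraph_append Q
  have claimP : ∀ a b, a ∈ P.support → b ∈ P.support → (G □ H).Adj a b →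
      W.toSubgraph.Adj a b := by
    intro a b haP hbP hadj
    obtain ⟨z1, hz1, rfl⟩ := (hPsupp a).mp haP
    obtain ⟨z2, hz2, rfl⟩ := (hPsupp b).mp hbP
    rw [SimpleGraph.boxProd_adj] at hadj
    rcases hadj with ⟨hGadj, -⟩ | ⟨hHadj, -⟩
    · exact absurd hGadj (G.irrefl)
    · have hind := hpHind z1 z2 hz1 hz2 hHadj
      have hPadj : P.toSubgraph.Adj (u, z1) (u, z2) := by
        rw [show P.toSubgraph = (pH.map (G.boxProdRight H u).toHom).toSubgraph from rfl,
          SimpleGraph.Walk.toSubgraph_map]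
        exact ⟨z1, z2, hind, rfl, rfl⟩
      rw [hWsub]
      exact SimpleGraph.Subgraph.sup_adj.mpr (Or.inl hPadj)
  have claimQ : ∀ a b, a ∈ Q.support → b ∈ Q.support → (G □ H).Adj a b →
      W.toSubgraph.Adj a b := by
    intro a b haQ hbQ hadj
    obtain ⟨z1, hz1, rfl⟩ := (hQsupp a).mp haQ
    obtain ⟨z2, hz2, rfl⟩ := (hQsupp b).mp hbQ
    rw [SimpleGraph.boxProd_adj] at hadj
    rcases hadj with ⟨hGadj, -⟩ | ⟨hHadj, -⟩
    · have hind := hpGind z1 z2 hz1 hz2 hGadj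
      have hQadj : Q.toSubgraph.Adj (z1, v) (z2, v) := by
        rw [show Q.toSubgraph = (pG.map (G.boxProdLeft H v).toHom).toSubgraph from rfl,
          SimpleGraph.Walk.toSubgraph_map]
        exact ⟨z1, z2, hind, rfl, rfl⟩
      rw [hWsub]
      exact SimpleGraph.Subgraph.sup_adj.mpr (Or.inr hQadj)
    · exact absurd hHadj (H.irrefl)
  have mixed : ∀ a b, a ∈ P.support → b ∈ Q.support → (G □ H).Adj a b →
      W.toSubgraph.Adj a b := by
    intro a b haP hbQ hadj
    obtain ⟨z1, hz1, rfl⟩ := (hPsupp a).mp haP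
    obtain ⟨z2, hz2, rfl⟩ := (hQsupp b).mp hbQ
    have hadj' := hadj
    rw [SimpleGraph.boxProd_adj] at hadj'
    rcases hadj' with ⟨-, hsnd⟩ | ⟨-, hfst⟩
    · -- z1 = v, so (u, z1) = (u, v) is the start of Q
      have hz1v : z1 = v := hsnd
      subst hz1v
      exact claimQ _ _ Q.start_mem_support hbQ hadj
    · -- u = z2, so (z2, v) = (u, v) is the end of P
      have hz2u : z2 = u := hfst.symm
      subst hz2u
      exact claimP _ _ haP P.end_mem_support hadj
  have hWind : ∀ a b, a ∈ W.support → b ∈ W.support → (G □ H).Adj a b →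
      W.toSubgraph.Adj a b := by
    intro a b haW hbW hadj
    rw [show W.support = (P.append Q).support from rfl,
      SimpleGraph.Walk.mem_support_append_iff] at haW hbW
    rcases haW with haP | haQ <;> rcases hbW with hbP | hbQ
    · exact claimP a b haP hbP hadj
    · exact mixed a b haP hbQ hadj
    · exact (mixed b a hbP haQ hadj.symm).symm
    · exact claimQ a b haQ hbQ hadj
  have hle := hS W ⟨hWpath, hWind⟩
  have hsub : ({(u, v'), (u, v), (u', v)} : Set (α × β)) ⊆ {c ∈ S | c ∈ W.support} := by
    intro c hc
    simp only [Set.mem_insert_iff, Set.mem_singleton_iff] at hc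
    rcases hc with rfl | rfl | rfl
    · exact ⟨hxeq ▸ hxS, W.start_mem_support⟩
    · refine ⟨huv, ?_⟩
      rw [show W.support = (P.append Q).support from rfl,
        SimpleGraph.Walk.mem_support_append_iff]
      exact Or.inl P.end_mem_support
    · exact ⟨hyeq ▸ hyS, W.end_mem_support⟩
  have h3 : ({(u, v'), (u, v), (u', v)} : Set (α × β)).ncard = 3 := by
    rw [Set.ncard_eq_three]
    refine ⟨_, _, _, ?_, ?_, ?_, rfl⟩
    · exact fun h => hv' (congrArg Prod.snd h)
    · exact fun h => hu' (congrArg Prod.fst h).symm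
    · exact fun h => hu' (congrArg Prod.fst h).symm
  have hge := Set.ncard_le_ncard hsub (Set.toFinite _)
  omega
end

section
/- Let G and H be finite connected graphs and let S = {(u_i,v_i) : i ∈ [r]} be a monophonic position set of the Cartesian product G □ H with r ≥ 2. Then at least one of the following holds: (a) all first coordinates u_i are equal, or all second coordinates v_i are equal (S lies in a single H-layer or a single G-layer); (b) u_1,…,u_r are pairwise distinct vertices of G and v_1,…,v_r are pairwise distinct vertices of H, and neither π_G(S) nor π_H(S) induces a clique; (c) π_G(S) induces a clique of G of order at least 2 and v_1,…,v_r are pairwise distinct, or π_H(S) induces a clique of H of order at least 2 and u_1,…,u_r are pairwise distinct. -/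
open SimpleGraph

namespace SimpleGraph
namespace Walk

variable {V : Type*} {G : SimpleGraph V}

lemma toSubgraph_adj_of_mem_edges {u v x y : V} (p : G.Walk u v)
    (h : s(x, y) ∈ p.edges) : p.toSubgraph.Adj x y :=
  Subgraph.mem_edgeSet.mp (p.mem_edges_toSubgraph.mpr h)

lemma isMonophonic_iff_edges {u v : V} (p : G.Walk u v) :
    p.IsMonophonic ↔ p.IsPath ∧ ∀ a b : V, a ∈ p.support → b ∈ p.support → G.Adj a b →
      s(a, b) ∈ p.edges := by
  unfold Walk.IsMonophonic
  refine and_congr_right fun _ => forall₂_congr fun a b => ?_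
  refine imp_congr_right fun _ => imp_congr_right fun _ => imp_congr_right fun _ => ?_
  rw [← Subgraph.mem_edgeSet, mem_edges_toSubgraph]

end Walk

lemma Connected.exists_isMonophonic {V : Type*} {G : SimpleGraph V} (hG : G.Connected)
    (x y : V) : ∃ p : G.Walk x y, p.IsMonophonic := by
  classical
  have hreach : ∃ n, ∃ w : G.Walk x y, w.length = n :=
    (hG.preconnected x y).elim fun w => ⟨w.length, w, rfl⟩
  obtain ⟨w, hw⟩ := Nat.find_spec hreach
  have hmin : ∀ q : G.Walk x y, Nat.find hreach ≤ q.length := fun q => Nat.find_le ⟨q, rfl⟩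
  set p := w.bypass with hpdef
  have hp : p.IsPath := w.bypass_isPath
  have hple : p.length ≤ Nat.find hreach := hw ▸ w.length_bypass_le
  refine ⟨p, (p.isMonophonic_iff_edges).mpr ⟨hp, ?_⟩⟩
  intro a b ha hb hadj
  obtain ⟨q, r, hqr⟩ := (Walk.mem_support_iff_exists_append).mp ha
  have hb' : b ∈ q.support ∨ b ∈ r.support := by
    rw [hqr, Walk.mem_support_append_iff] at hb; exact hb
  have edge_of_len_one : ∀ {c d : V} (t : G.Walk c d), t.length = 1 → s(c, d) ∈ t.edges := by
    intro c d t ht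
    have h0 := t.toSubgraph_adj_getVert (i := 0) (by omega)
    rw [Walk.getVert_zero] at h0
    have hvb : t.getVert 1 = d := by conv_lhs => rw [← ht]; rw [t.getVert_length]
    rw [hvb] at h0
    exact t.mem_edges_toSubgraph.mp (Subgraph.mem_edgeSet.mpr h0)
  rcases hb' with hbq | hbr
  · obtain ⟨q₁, q₂, hq⟩ := (Walk.mem_support_iff_exists_append).mp hbq
    have halt := hmin (q₁.append (Walk.cons hadj.symm r))
    have hlen : p.length = q₁.length + q₂.length + r.length := by
      rw [hqr, hq]; simp [Walk.length_append]
    rw [show (q₁.append (Walk.cons hadj.symm r)).length = q₁.length + (r.length + 1) by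
      simp [Walk.length_append]] at halt
    have h2 : q₂.length = 1 := by
      rcases Nat.lt_or_ge q₂.length 1 with h | h
      · have h0 : q₂.length = 0 := by omega
        exact absurd (Walk.eq_of_length_eq_zero h0).symm hadj.ne
      · omega
    have hmem : s(b, a) ∈ q₂.edges := edge_of_len_one q₂ h2
    rw [Sym2.eq_swap]
    rw [hqr, hq, Walk.edges_append, Walk.edges_append]
    simp only [List.mem_append]
    exact Or.inl (Or.inr hmem)
  · obtain ⟨r₁, r₂, hr⟩ := (Walk.mem_support_iff_exists_append).mp hbr
    have halt := hmin (q.append (Walk.cons hadj r₂))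
    have hlen : p.length = q.length + (r₁.length + r₂.length) := by
      rw [hqr, hr]; simp [Walk.length_append]
    rw [show (q.append (Walk.cons hadj r₂)).length = q.length + (r₂.length + 1) by
      simp [Walk.length_append]] at halt
    have h2 : r₁.length = 1 := by
      rcases Nat.lt_or_ge r₁.length 1 with h | h
      · have h0 : r₁.length = 0 := by omega
        exact absurd (Walk.eq_of_length_eq_zero h0) hadj.ne
      · omega
    have hmem : s(a, b) ∈ r₁.edges := edge_of_len_one r₁ h2
    rw [hqr, hr, Walk.edges_append, Walk.edges_append]
    simp only [List.mem_append]
    exact Or.inr (Or.inl hmem)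

end SimpleGraph

namespace SimpleGraph

variable {α β : Type*} {G : SimpleGraph α} {H : SimpleGraph β}

lemma gstair {g₁ g₂ : α} {c a d : β} {P : H.Walk c a} {W : G.Walk g₁ g₂} {Q : H.Walk a d}
    (hP : P.IsMonophonic) (hW : W.IsMonophonic) (hQ : Q.IsMonophonic)
    (hne : g₁ ≠ g₂)
    (hcross : G.Adj g₁ g₂ → ∀ x ∈ P.support, ∀ y ∈ Q.support, x = y → x = a) :
    ((P.map (G.boxProdRight H g₁).toHom).append
      ((W.map (G.boxProdLeft H a).toHom).append
        (Q.map (G.boxProdRight H g₂).toHom))).IsMonophonic := by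
  classical
  obtain ⟨hPp, hPe⟩ := (P.isMonophonic_iff_edges).mp hP
  obtain ⟨hWp, hWe⟩ := (W.isMonophonic_iff_edges).mp hW
  obtain ⟨hQp, hQe⟩ := (Q.isMonophonic_iff_edges).mp hQ
  set A := P.map (G.boxProdRight H g₁).toHom with hA
  set B := W.map (G.boxProdLeft H a).toHom with hB
  set C := Q.map (G.boxProdRight H g₂).toHom with hC
  have hAsup : A.support = P.support.map (fun x => ((g₁, x) : α × β)) := by
    rw [hA, Walk.support_map]; rfl
  have hBsup : B.support = W.support.map (fun w => ((w, a) : α × β)) := by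
    rw [hB, Walk.support_map]; rfl
  have hCsup : C.support = Q.support.map (fun y => ((g₂, y) : α × β)) := by
    rw [hC, Walk.support_map]; rfl
  have hBtail : B.support.tail = W.support.tail.map (fun w => ((w, a) : α × β)) := by
    rw [hBsup]; conv_lhs => rw [W.support_eq_cons]
    rfl
  have hCtail : C.support.tail = Q.support.tail.map (fun y => ((g₂, y) : α × β)) := by
    rw [hCsup]; conv_lhs => rw [Q.support_eq_cons]
    rfl
  have haQ : a ∉ Q.support.tail := by
    have h := hQp.support_nodup
    rw [Q.support_eq_cons] at h
    exact (List.nodup_cons.mp h).1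
  have hg₁W : g₁ ∉ W.support.tail := by
    have h := hWp.support_nodup
    rw [W.support_eq_cons] at h
    exact (List.nodup_cons.mp h).1
  have hmem : ∀ z ∈ (A.append (B.append C)).support,
      (∃ x ∈ P.support, z = ((g₁, x) : α × β)) ∨ (∃ w ∈ W.support, z = (w, a)) ∨
        (∃ y ∈ Q.support, z = (g₂, y)) := by
    intro z hz
    replace hz := ((Walk.mem_support_append_iff A _).mp hz).imp_right (Walk.mem_support_append_iff B C).mp
    rcases hz with hz | hz | hz
    · rw [hAsup] at hz; obtain ⟨x, hx, rfl⟩ := List.mem_map.mp hz; exact Or.inl ⟨x, hx, rfl⟩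
    · rw [hBsup] at hz; obtain ⟨w, hw, rfl⟩ := List.mem_map.mp hz
      exact Or.inr (Or.inl ⟨w, hw, rfl⟩)
    · replace hz : z ∈ C.support := hz; rw [hCsup] at hz; obtain ⟨y, hy, rfl⟩ := List.mem_map.mp hz
      exact Or.inr (Or.inr ⟨y, hy, rfl⟩)
  have hedges : (A.append (B.append C)).edges = A.edges ++ (B.edges ++ C.edges) := by
    exact (Walk.edges_append A _).trans (congrArg (A.edges ++ ·) (Walk.edges_append B C))
  have eA : ∀ {x y : β}, x ∈ P.support → y ∈ P.support → H.Adj x y →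
      s(((g₁, x) : α × β), (g₁, y)) ∈ (A.append (B.append C)).edges := by
    intro x y hx hy hxy
    rw [hedges]
    refine List.mem_append.mpr (Or.inl ?_)
    rw [hA, Walk.edges_map]
    exact List.mem_map.mpr ⟨s(x, y), hPe x y hx hy hxy, Sym2.map_pair_eq _ _ _⟩
  have eB : ∀ {w w' : α}, w ∈ W.support → w' ∈ W.support → G.Adj w w' →
      s(((w, a) : α × β), (w', a)) ∈ (A.append (B.append C)).edges := by
    intro w w' hw hw' hww
    rw [hedges]
    refine List.mem_append.mpr (Or.inr (List.mem_append.mpr (Or.inl ?_)))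
    rw [hB, Walk.edges_map]
    exact List.mem_map.mpr ⟨s(w, w'), hWe w w' hw hw' hww, Sym2.map_pair_eq _ _ _⟩
  have eC : ∀ {x y : β}, x ∈ Q.support → y ∈ Q.support → H.Adj x y →
      s(((g₂, x) : α × β), (g₂, y)) ∈ (A.append (B.append C)).edges := by
    intro x y hx hy hxy
    rw [hedges]
    refine List.mem_append.mpr (Or.inr (List.mem_append.mpr (Or.inr ?_)))
    rw [hC, Walk.edges_map]
    exact List.mem_map.mpr ⟨s(x, y), hQe x y hx hy hxy, Sym2.map_pair_eq _ _ _⟩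
  have hAB : ∀ x ∈ P.support, ∀ w ∈ W.support, (G □ H).Adj (g₁, x) (w, a) →
      s(((g₁, x) : α × β), (w, a)) ∈ (A.append (B.append C)).edges := by
    intro x hx w hw hadj
    rcases boxProd_adj.mp hadj with ⟨h1, h2⟩ | ⟨h1, h2⟩
    · dsimp at h1 h2; subst h2; exact eB W.start_mem_support hw h1
    · dsimp at h1 h2; subst h2; exact eA hx P.end_mem_support h1
  have hAC : ∀ x ∈ P.support, ∀ y ∈ Q.support, (G □ H).Adj (g₁, x) (g₂, y) →
      s(((g₁, x) : α × β), (g₂, y)) ∈ (A.append (B.append C)).edges := by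
    intro x hx y hy hadj
    rcases boxProd_adj.mp hadj with ⟨h1, h2⟩ | ⟨h1, h2⟩
    · dsimp at h1 h2
      have hxa := hcross h1 x hx y hy h2
      subst h2; subst hxa
      exact eB W.start_mem_support W.end_mem_support h1
    · exact absurd h2 hne
  have hBC : ∀ w ∈ W.support, ∀ y ∈ Q.support, (G □ H).Adj (w, a) (g₂, y) →
      s(((w, a) : α × β), (g₂, y)) ∈ (A.append (B.append C)).edges := by
    intro w hw y hy hadj
    rcases boxProd_adj.mp hadj with ⟨h1, h2⟩ | ⟨h1, h2⟩
    · dsimp at h1 h2; subst h2; exact eB hw W.end_mem_support h1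
    · dsimp at h1 h2; subst h2; exact eC Q.start_mem_support hy h1
  refine (Walk.isMonophonic_iff_edges _).mpr ⟨?_, ?_⟩
  · -- IsPath
    have hApath : A.IsPath :=
      Walk.map_isPath_of_injective (G.boxProdRight H g₁).injective hPp
    have hBpath : B.IsPath :=
      Walk.map_isPath_of_injective (G.boxProdLeft H a).injective hWp
    have hCpath : C.IsPath :=
      Walk.map_isPath_of_injective (G.boxProdRight H g₂).injective hQp
    rw [Walk.isPath_def, show (A.append (B.append C)).support = A.support ++ (B.support ++ C.support.tail).tail from
        (Walk.support_append A _).trans (congrArg (fun l => A.support ++ l.tail) (Walk.support_append B C)),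
      List.tail_append_of_ne_nil (Walk.support_ne_nil _)]
    have hinjB : Function.Injective (fun w : α => ((w, a) : α × β)) :=
      fun x y h => congrArg Prod.fst h
    have hinjC : Function.Injective (fun y : β => ((g₂, y) : α × β)) :=
      fun x y h => congrArg Prod.snd h
    refine List.nodup_append.mpr ⟨hApath.support_nodup, ?_, ?_⟩
    · refine List.nodup_append.mpr ⟨?_, ?_, ?_⟩
      · rw [hBtail]
        exact ((List.tail_sublist _).nodup hWp.support_nodup).map hinjB
      · rw [hCtail]
        exact ((List.tail_sublist _).nodup hQp.support_nodup).map hinjC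
      · intro z hz1 z' hz2 rfl
        rw [hBtail] at hz1
        rw [hCtail] at hz2
        obtain ⟨w, hw, rfl⟩ := List.mem_map.mp hz1
        obtain ⟨y, hy, heq⟩ := List.mem_map.mp hz2
        have : y = a := (Prod.ext_iff.mp heq).2
        exact haQ (this ▸ hy)
    · intro z hz1 z' hz2 rfl
      rw [hAsup] at hz1
      obtain ⟨x, hx, rfl⟩ := List.mem_map.mp hz1
      rcases List.mem_append.mp hz2 with hz2 | hz2
      · rw [hBtail] at hz2
        obtain ⟨w, hw, heq⟩ := List.mem_map.mp hz2
        have : w = g₁ := (Prod.ext_iff.mp heq).1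
        exact hg₁W (this ▸ hw)
      · rw [hCtail] at hz2
        obtain ⟨y, hy, heq⟩ := List.mem_map.mp hz2
        exact hne ((Prod.ext_iff.mp heq).1).symm
  · intro p q hp hq hadj
    rcases hmem p hp with ⟨x, hx, rfl⟩ | ⟨w, hw, rfl⟩ | ⟨y, hy, rfl⟩ <;>
      rcases hmem q hq with ⟨x', hx', rfl⟩ | ⟨w', hw', rfl⟩ | ⟨y', hy', rfl⟩
    · rcases boxProd_adj.mp hadj with ⟨h1, _⟩ | ⟨h2, _⟩
      · exact absurd h1 (G.irrefl)
      · exact eA hx hx' h2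
    · exact hAB x hx w' hw' hadj
    · exact hAC x hx y' hy' hadj
    · rw [Sym2.eq_swap]; exact hAB x' hx' w hw hadj.symm
    · rcases boxProd_adj.mp hadj with ⟨h1, _⟩ | ⟨h2, _⟩
      · exact eB hw hw' h1
      · exact absurd h2 (H.irrefl)
    · exact hBC w hw y' hy' hadj
    · rw [Sym2.eq_swap]; exact hAC x' hx' y hy hadj.symm
    · rw [Sym2.eq_swap]; exact hBC w' hw' y hy hadj.symm
    · rcases boxProd_adj.mp hadj with ⟨h1, _⟩ | ⟨h2, _⟩
      · exact absurd h1 (G.irrefl)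
      · exact eC hy hy' h2

end SimpleGraph

namespace SimpleGraph

variable {α β : Type*} {G : SimpleGraph α} {H : SimpleGraph β}

lemma nil_isMonophonic {x : α} : (Walk.nil : G.Walk x x).IsMonophonic := by
  refine ⟨Walk.IsPath.nil, ?_⟩
  intro p q hp hq hadj
  simp only [Walk.support_nil, List.mem_singleton] at hp hq
  subst hp; subst hq
  exact absurd hadj (G.irrefl)

lemma single_edge_isMonophonic {x y : α} (h : G.Adj x y) :
    (Walk.cons h Walk.nil).IsMonophonic := by
  refine ((Walk.cons h Walk.nil).isMonophonic_iff_edges).mpr ⟨?_, ?_⟩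
  · simp [Walk.isPath_def, h.ne]
  · intro p q hp hq hadj
    simp only [Walk.support_cons, Walk.support_nil, List.mem_cons, List.mem_singleton,
      List.not_mem_nil, or_false] at hp hq
    simp only [Walk.edges_cons, Walk.edges_nil, List.mem_singleton]
    rcases hp with rfl | rfl <;> rcases hq with rfl | rfl
    · exact absurd hadj (G.irrefl)
    · rfl
    · exact Sym2.eq_swap
    · exact absurd hadj (G.irrefl)

lemma two_edge_isMonophonic {g₁ g₂ g₃ : α} (h1 : G.Adj g₁ g₂) (h2 : G.Adj g₂ g₃)
    (h13 : ¬ G.Adj g₁ g₃) (hne : g₁ ≠ g₃) :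
    (Walk.cons h1 (Walk.cons h2 Walk.nil)).IsMonophonic := by
  refine (Walk.isMonophonic_iff_edges _).mpr ⟨?_, ?_⟩
  · simp [Walk.isPath_def, h1.ne, h2.ne, hne]
  · intro p q hp hq hadj
    simp only [Walk.support_cons, Walk.support_nil, List.mem_cons, List.mem_singleton,
      List.not_mem_nil, or_false] at hp hq
    simp only [Walk.edges_cons, Walk.edges_nil, List.mem_cons, List.mem_singleton,
      List.not_mem_nil, or_false]
    rcases hp with rfl | rfl | rfl <;> rcases hq with rfl | rfl | rfl
    · exact absurd hadj (G.irrefl)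
    · exact Or.inl rfl
    · exact absurd hadj h13
    · exact Or.inl Sym2.eq_swap
    · exact absurd hadj (G.irrefl)
    · exact Or.inr rfl
    · exact absurd hadj (fun h => h13 h.symm)
    · exact Or.inr Sym2.eq_swap
    · exact absurd hadj (G.irrefl)

lemma three_points {V : Type*} [Fintype V] {Γ : SimpleGraph V} {S : Set V}
    (hS : Γ.IsMPSet S) {x y : V} (p : Γ.Walk x y) (hp : p.IsMonophonic) {a b c : V}
    (ha : a ∈ S) (hb : b ∈ S) (hc : c ∈ S) (hab : a ≠ b) (hac : a ≠ c) (hbc : b ≠ c)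
    (has : a ∈ p.support) (hbs : b ∈ p.support) (hcs : c ∈ p.support) : False := by
  have h := hS p hp
  have hsub : ({a, b, c} : Set V) ⊆ {x ∈ S | x ∈ p.support} := by
    intro z hz
    simp only [Set.mem_insert_iff, Set.mem_singleton_iff] at hz
    rcases hz with rfl | rfl | rfl
    · exact ⟨ha, has⟩
    · exact ⟨hb, hbs⟩
    · exact ⟨hc, hcs⟩
  have h3 : ({a, b, c} : Set V).ncard = 3 :=
    Set.ncard_eq_three.mpr ⟨a, b, c, hab, hac, hbc, rfl⟩
  have hle := Set.ncard_le_ncard hsub (Set.toFinite _)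
  omega

lemma IsMPSet.box_swap {S : Set (α × β)} (hS : (G □ H).IsMPSet S) :
    (H □ G).IsMPSet (Prod.swap '' S) := by
  intro x y p hp
  set e : (H □ G) ≃g (G □ H) := boxProdComm H G with he
  set q := p.map e.toHom with hq
  have hqsup : q.support = p.support.map Prod.swap := by rw [hq, Walk.support_map]; rfl
  have hqmono : q.IsMonophonic := by
    obtain ⟨hpp, hpe⟩ := hp
    constructor
    · exact Walk.map_isPath_of_injective (fun a b h => Prod.swap_injective h) hpp
    · intro z w hz hw hadj
      rw [hqsup] at hz hw
      obtain ⟨z', hz', rfl⟩ := List.mem_map.mp hz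
      obtain ⟨w', hw', rfl⟩ := List.mem_map.mp hw
      have hadj' : (H □ G).Adj z' w' := by
        rcases boxProd_adj.mp hadj with ⟨h1, h2⟩ | ⟨h1, h2⟩
        · exact boxProd_adj.mpr (Or.inr ⟨h1, h2⟩)
        · exact boxProd_adj.mpr (Or.inl ⟨h1, h2⟩)
      have hsub := hpe z' w' hz' hw' hadj'
      rw [hq, Walk.toSubgraph_map]
      exact ⟨z', w', hsub, rfl, rfl⟩
  have hcount := hS q hqmono
  have hset : {z ∈ Prod.swap '' S | z ∈ p.support} = Prod.swap '' {w ∈ S | w ∈ q.support} := by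
    ext z
    simp only [Set.mem_setOf_eq, Set.mem_image, hqsup, List.mem_map]
    constructor
    · rintro ⟨⟨w, hwS, rfl⟩, hzsup⟩
      exact ⟨w, ⟨hwS, ⟨Prod.swap w, hzsup, Prod.swap_swap w⟩⟩, rfl⟩
    · rintro ⟨w, ⟨hwS, ⟨z', hz', hz'w⟩⟩, rfl⟩
      refine ⟨⟨w, hwS, rfl⟩, ?_⟩
      rw [← hz'w, Prod.swap_swap]
      exact hz'
  rw [hset, Set.ncard_image_of_injective _ Prod.swap_injective]
  exact hcount

end SimpleGraph

namespace SimpleGraph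

variable {α β : Type*} [Fintype α] [Fintype β] {G : SimpleGraph α} {H : SimpleGraph β}
variable {S : Set (α × β)}

/-- Two points in one column plus a point in a non-adjacent column contradict mp. -/
lemma K1 (hG : G.Connected) (hH : H.Connected) (hS : (G □ H).IsMPSet S)
    {g g' : α} {a b c : β} (h1 : (g, a) ∈ S) (h2 : (g, b) ∈ S) (h3 : (g', c) ∈ S)
    (hab : a ≠ b) (hne : g' ≠ g) (hnadj : ¬ G.Adj g' g) : False := by
  obtain ⟨P, hP⟩ := hH.exists_isMonophonic c a
  obtain ⟨W, hW⟩ := hG.exists_isMonophonic g' g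
  obtain ⟨Q, hQ⟩ := hH.exists_isMonophonic a b
  have hmono := gstair hP hW hQ hne (fun h => absurd h hnadj)
  set Ω := (P.map (G.boxProdRight H g').toHom).append
      ((W.map (G.boxProdLeft H a).toHom).append
        (Q.map (G.boxProdRight H g).toHom)) with hΩ
  have hmid : ((g, a) : α × β) ∈ Ω.support := by
    rw [hΩ]
    refine (Walk.mem_support_append_iff _ _).mpr (Or.inr ((Walk.mem_support_append_iff (W.map (G.boxProdLeft H a).toHom) _).mpr (Or.inl ?_)))
    rw [Walk.support_map]
    exact List.mem_map.mpr ⟨g, W.end_mem_support, rfl⟩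
  refine three_points hS Ω hmono h3 h1 h2 ?_ ?_ ?_ Ω.start_mem_support hmid Ω.end_mem_support
  · exact fun h => hne (Prod.ext_iff.mp h).1
  · exact fun h => hne (Prod.ext_iff.mp h).1
  · exact fun h => hab (Prod.ext_iff.mp h).2

/-- A 3-fan: columns g₁ ~ g₂ ~ g₃ with g₁ ≁ g₃, one point in each column. -/
lemma K2 (hH : H.Connected) (hS : (G □ H).IsMPSet S)
    {g₁ g₂ g₃ : α} {c aa dd : β} (h12 : G.Adj g₁ g₂) (h23 : G.Adj g₂ g₃)
    (h13 : ¬ G.Adj g₁ g₃) (hne : g₁ ≠ g₃)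
    (h1 : (g₁, c) ∈ S) (h2 : (g₂, aa) ∈ S) (h3 : (g₃, dd) ∈ S) : False := by
  obtain ⟨P, hP⟩ := hH.exists_isMonophonic c aa
  obtain ⟨Q, hQ⟩ := hH.exists_isMonophonic aa dd
  have hWmono := two_edge_isMonophonic h12 h23 h13 hne
  have hmono := gstair hP hWmono hQ hne (fun h => absurd h h13)
  set Ω := (P.map (G.boxProdRight H g₁).toHom).append
      (((Walk.cons h12 (Walk.cons h23 Walk.nil)).map (G.boxProdLeft H aa).toHom).append
        (Q.map (G.boxProdRight H g₃).toHom)) with hΩ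
  have hmid : ((g₂, aa) : α × β) ∈ Ω.support := by
    rw [hΩ]
    refine (Walk.mem_support_append_iff _ _).mpr (Or.inr ((Walk.mem_support_append_iff ((Walk.cons h12 (Walk.cons h23 Walk.nil)).map (G.boxProdLeft H aa).toHom) _).mpr (Or.inl ?_)))
    rw [Walk.support_map]
    refine List.mem_map.mpr ⟨g₂, ?_, rfl⟩
    simp
  refine three_points hS Ω hmono h1 h2 h3 ?_ ?_ ?_ Ω.start_mem_support hmid Ω.end_mem_support
  · exact fun h => h12.ne (Prod.ext_iff.mp h).1
  · exact fun h => hne (Prod.ext_iff.mp h).1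
  · exact fun h => h23.ne (Prod.ext_iff.mp h).1

/-- An L-shape: two points in one row at adjacent columns, plus a point above. -/
lemma K3 (hH : H.Connected) (hS : (G □ H).IsMPSet S)
    {x y : α} {cc aa : β} (hxy : G.Adj x y) (hca : cc ≠ aa)
    (h1 : (x, cc) ∈ S) (h2 : (y, cc) ∈ S) (h3 : (y, aa) ∈ S) : False := by
  have hS' := hS.box_swap
  obtain ⟨W, hW⟩ := hH.exists_isMonophonic cc aa
  have hcross : H.Adj cc aa → ∀ x' ∈ (Walk.cons hxy Walk.nil).support,
      ∀ y' ∈ (Walk.nil : G.Walk y y).support, x' = y' → x' = y := by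
    intro _ x' hx' y' hy' hee
    simp only [Walk.support_cons, Walk.support_nil, List.mem_cons, List.mem_singleton,
      List.not_mem_nil, or_false] at hx' hy'
    subst hy'
    rcases hx' with rfl | rfl
    · exact absurd hee hxy.ne
    · rfl
  have hmono := gstair (G := H) (H := G) (single_edge_isMonophonic hxy) hW
    (nil_isMonophonic) hca hcross
  set Ω := ((Walk.cons hxy Walk.nil).map (H.boxProdRight G cc).toHom).append
      ((W.map (H.boxProdLeft G y).toHom).append
        ((Walk.nil : G.Walk y y).map (H.boxProdRight G aa).toHom)) with hΩ
  have hmid : ((cc, y) : β × α) ∈ Ω.support := by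
    rw [hΩ]
    refine (Walk.mem_support_append_iff _ _).mpr (Or.inl ?_)
    rw [Walk.support_map]
    refine List.mem_map.mpr ⟨y, ?_, rfl⟩
    simp
  refine three_points hS' Ω hmono ⟨(x, cc), h1, rfl⟩ ⟨(y, cc), h2, rfl⟩ ⟨(y, aa), h3, rfl⟩
    ?_ ?_ ?_ Ω.start_mem_support hmid Ω.end_mem_support
  · exact fun h => hxy.ne (Prod.ext_iff.mp h).2
  · exact fun h => hca (Prod.ext_iff.mp h).1
  · exact fun h => hca (Prod.ext_iff.mp h).1

/-- A Z-shape. -/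
lemma K4 (hH : H.Connected) (hS : (G □ H).IsMPSet S)
    {x y z : α} {cc aa : β} (hxy : G.Adj x y) (hyz : G.Adj y z) (hxz : x ≠ z) (hca : cc ≠ aa)
    (h1 : (x, cc) ∈ S) (h2 : (y, cc) ∈ S) (h3 : (z, aa) ∈ S) : False := by
  have hS' := hS.box_swap
  obtain ⟨W, hW⟩ := hH.exists_isMonophonic cc aa
  have hcross : H.Adj cc aa → ∀ x' ∈ (Walk.cons hxy Walk.nil).support,
      ∀ y' ∈ (Walk.cons hyz Walk.nil).support, x' = y' → x' = y := by
    intro _ x' hx' y' hy' hee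
    simp only [Walk.support_cons, Walk.support_nil, List.mem_cons, List.mem_singleton,
      List.not_mem_nil, or_false] at hx' hy'
    rcases hx' with rfl | rfl
    · rcases hy' with rfl | rfl
      · exact absurd hee hxy.ne
      · exact absurd hee hxz
    · rfl
  have hmono := gstair (G := H) (H := G) (single_edge_isMonophonic hxy) hW
    (single_edge_isMonophonic hyz) hca hcross
  set Ω := ((Walk.cons hxy Walk.nil).map (H.boxProdRight G cc).toHom).append
      ((W.map (H.boxProdLeft G y).toHom).append
        ((Walk.cons hyz Walk.nil).map (H.boxProdRight G aa).toHom)) with hΩ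
  have hmid : ((cc, y) : β × α) ∈ Ω.support := by
    rw [hΩ]
    refine (Walk.mem_support_append_iff _ _).mpr (Or.inl ?_)
    rw [Walk.support_map]
    refine List.mem_map.mpr ⟨y, ?_, rfl⟩
    simp
  refine three_points hS' Ω hmono ⟨(x, cc), h1, rfl⟩ ⟨(y, cc), h2, rfl⟩ ⟨(z, aa), h3, rfl⟩
    ?_ ?_ ?_ Ω.start_mem_support hmid Ω.end_mem_support
  · exact fun h => hxy.ne (Prod.ext_iff.mp h).2
  · exact fun h => hca (Prod.ext_iff.mp h).1
  · exact fun h => hca (Prod.ext_iff.mp h).1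

end SimpleGraph

namespace SimpleGraph

variable {α β : Type*} [Fintype α] [Fintype β] {G : SimpleGraph α} {H : SimpleGraph β}

lemma main_aux (hG : G.Connected) (hH : H.Connected) {r : ℕ}
    (u : Fin r → α) (v : Fin r → β) (hinj : Function.Injective fun i => (u i, v i))
    (hS : (G □ H).IsMPSet (Set.range fun i => (u i, v i)))
    {i j k : Fin r} (hij : i ≠ j) (huij : u i = u j) (hk : u k ≠ u i) :
    G.IsClique (Set.range u) ∧ Function.Injective v := by
  set S := Set.range fun i => (u i, v i) with hSdef
  have hmemS : ∀ l, ((u l, v l) : α × β) ∈ S := fun l => ⟨l, rfl⟩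
  have hab : v i ≠ v j := fun h => hij (hinj (Prod.ext huij h))
  have hmemJ : ((u i, v j) : α × β) ∈ S := by rw [huij]; exact hmemS j
  -- Step 1: every other column is adjacent to column u i
  have hadjg : ∀ l, u l ≠ u i → G.Adj (u l) (u i) := by
    intro l hl
    by_contra hno
    exact K1 hG hH hS (hmemS i) hmemJ (hmemS l) hab hl hno
  -- Step 2: the projection is a clique
  have hclique : G.IsClique (Set.range u) := by
    intro x hx y hy hxy
    obtain ⟨k1, rfl⟩ := hx
    obtain ⟨k2, rfl⟩ := hy
    by_cases h1 : u k1 = u i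
    · have h2 : u k2 ≠ u i := by rw [← h1]; exact fun h => hxy h.symm
      rw [h1]
      exact (hadjg k2 h2).symm
    · by_cases h2 : u k2 = u i
      · rw [h2]; exact hadjg k1 h1
      · by_contra hno
        exact K2 hH hS (hadjg k1 h1) (hadjg k2 h2).symm hno hxy
          (hmemS k1) (hmemS i) (hmemS k2)
  -- Step 3: the second coordinates are distinct
  have hvinj : Function.Injective v := by
    intro k1 k2 h12
    by_contra hkl
    have hu12 : u k1 ≠ u k2 := fun h => hkl (hinj (Prod.ext h h12))
    have hexists : ∃ aa, aa ≠ v k1 ∧ ((u i, aa) : α × β) ∈ S := by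
      by_cases hcc : v k1 = v i
      · exact ⟨v j, by rw [hcc]; exact fun h => hab h.symm, hmemJ⟩
      · exact ⟨v i, fun h => hcc h.symm, hmemS i⟩
    obtain ⟨aa, haacc, haaS⟩ := hexists
    have hmk2 : ((u k2, v k1) : α × β) ∈ S := by rw [h12]; exact hmemS k2
    by_cases hk1 : u k1 = u i
    · have hk2 : u k2 ≠ u i := by rw [← hk1]; exact fun h => hu12 h.symm
      have hmk1 : ((u i, v k1) : α × β) ∈ S := by rw [← hk1]; exact hmemS k1
      exact K3 hH hS (hadjg k2 hk2) haacc.symm hmk2 hmk1 haaS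
    · by_cases hk2 : u k2 = u i
      · have hmk2' : ((u i, v k1) : α × β) ∈ S := by rw [← hk2]; exact hmk2
        exact K3 hH hS (hadjg k1 hk1) haacc.symm (hmemS k1) hmk2' haaS
      · have hadjxy : G.Adj (u k1) (u k2) := hclique ⟨k1, rfl⟩ ⟨k2, rfl⟩ hu12
        have hadjyz : G.Adj (u k2) (u i) := hadjg k2 hk2
        exact K4 hH hS hadjxy hadjyz hk1 haacc.symm (hmemS k1) hmk2 haaS
  exact ⟨hclique, hvinj⟩

end SimpleGraph

/-- a monophonic position set `S = {(uᵢ,vᵢ) : i ∈ [r]}` of `G □ H` with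
`r ≥ 2` is layered, varied, or cliquey. -/
theorem isMPSet_boxProd_trichotomy {α β : Type*} [Fintype α] [Fintype β]
    (G : SimpleGraph α) (H : SimpleGraph β) (hG : G.Connected) (hH : H.Connected)
    (r : ℕ) (hr : 2 ≤ r) (u : Fin r → α) (v : Fin r → β)
    (hinj : Function.Injective fun i => (u i, v i))
    (hS : (G □ H).IsMPSet (Set.range fun i => (u i, v i))) :
    -- (a) S lies in a single H-layer or in a single G-layer
    ((∀ i j, u i = u j) ∨ (∀ i j, v i = v j)) ∨
    -- (b) varied: all uᵢ distinct, all vᵢ distinct, neither projection induces a clique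
    (Function.Injective u ∧ Function.Injective v ∧
      ¬ G.IsClique (Set.range u) ∧ ¬ H.IsClique (Set.range v)) ∨
    -- (c) cliquey
    ((G.IsClique (Set.range u) ∧ 2 ≤ (Set.range u).ncard ∧ Function.Injective v) ∨
     (H.IsClique (Set.range v) ∧ 2 ≤ (Set.range v).ncard ∧ Function.Injective u)) := by
  classical
  by_cases hu : Function.Injective u
  · by_cases hv : Function.Injective v
    · have hcardu : (Set.range u).ncard = r := by
        rw [← Set.image_univ, Set.ncard_image_of_injective _ hu, Set.ncard_univ,
          Nat.card_eq_fintype_card, Fintype.card_fin]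
      have hcardv : (Set.range v).ncard = r := by
        rw [← Set.image_univ, Set.ncard_image_of_injective _ hv, Set.ncard_univ,
          Nat.card_eq_fintype_card, Fintype.card_fin]
      by_cases hcu : G.IsClique (Set.range u)
      · exact Or.inr (Or.inr (Or.inl ⟨hcu, hcardu.symm ▸ hr, hv⟩))
      · by_cases hcv : H.IsClique (Set.range v)
        · exact Or.inr (Or.inr (Or.inr ⟨hcv, hcardv.symm ▸ hr, hu⟩))
        · exact Or.inr (Or.inl ⟨hu, hv, hcu, hcv⟩)
    · -- v not injective
      obtain ⟨i, j, hvij, hij⟩ := Function.not_injective_iff.mp hv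
      by_cases hconst : ∀ k l, v k = v l
      · exact Or.inl (Or.inr hconst)
      · push_neg at hconst
        obtain ⟨k, l, hkl⟩ := hconst
        have hkex : ∃ m, v m ≠ v i := by
          by_cases h : v k = v i
          · exact ⟨l, fun hh => hkl (by rw [h, hh])⟩
          · exact ⟨k, h⟩
        obtain ⟨m, hm⟩ := hkex
        have hinj' : Function.Injective fun i => (v i, u i) := by
          intro a b h
          have h' := Prod.ext_iff.mp h
          exact hinj (Prod.ext h'.2 h'.1)
        have hS' : (H □ G).IsMPSet (Set.range fun i => (v i, u i)) := by
          have h2 := hS.box_swap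
          rw [← Set.range_comp] at h2
          exact h2
        obtain ⟨hcl, huinj⟩ := SimpleGraph.main_aux hH hG v u hinj' hS' hij hvij hm
        refine Or.inr (Or.inr (Or.inr ⟨hcl, ?_, huinj⟩))
        have hsub : ({v i, v m} : Set β) ⊆ Set.range v := by
          rintro z hz
          rcases hz with rfl | rfl
          exacts [⟨i, rfl⟩, ⟨m, rfl⟩]
        calc (2 : ℕ) = ({v i, v m} : Set β).ncard := (Set.ncard_pair (Ne.symm hm)).symm
          _ ≤ (Set.range v).ncard := Set.ncard_le_ncard hsub (Set.toFinite _)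
  · -- u not injective
    obtain ⟨i, j, huij, hij⟩ := Function.not_injective_iff.mp hu
    by_cases hconst : ∀ k l, u k = u l
    · exact Or.inl (Or.inl hconst)
    · push_neg at hconst
      obtain ⟨k, l, hkl⟩ := hconst
      have hkex : ∃ m, u m ≠ u i := by
        by_cases h : u k = u i
        · exact ⟨l, fun hh => hkl (by rw [h, hh])⟩
        · exact ⟨k, h⟩
      obtain ⟨m, hm⟩ := hkex
      obtain ⟨hcl, hvinj⟩ := SimpleGraph.main_aux hG hH u v hinj hS hij huij hm
      refine Or.inr (Or.inr (Or.inl ⟨hcl, ?_, hvinj⟩))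
      have hsub : ({u i, u m} : Set α) ⊆ Set.range u := by
        rintro z hz
        rcases hz with rfl | rfl
        exacts [⟨i, rfl⟩, ⟨m, rfl⟩]
      calc (2 : ℕ) = ({u i, u m} : Set α).ncard := (Set.ncard_pair (Ne.symm hm)).symm
        _ ≤ (Set.range u).ncard := Set.ncard_le_ncard hsub (Set.toFinite _)
end
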